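/- Let 0 < L ≤ U, let h : [L, U] → ℝ be positive, nondecreasing, and continuously differentiable, and let α > 0. Suppose G : [L, U] → ℝ is continuous, nondecreasing, and satisfies G(v)·h(v) − ∫_L^v G(u)·h'(u) du ≥ h(v)/α for all v ∈ [L, U]. Then G(v) ≥ (1/α)·(1 + ln(h(v)/h(L))) for all v ∈ [L, U]. Consequently, if G(U) ≤ 1, then α ≥ 1 + ln(h(U)/h(L)). -/

import Mathlib

open Real Set Filter Topology MeasureTheory intervalIntegral

theorem stmt_14 (L U α : ℝ) (hL : 0 < L) (hLU : L ≤ U) (hα : 0 < α)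
    (h h' : ℝ → ℝ)
    (hpos : ∀ v ∈ Set.Icc L U, 0 < h v)
    (hmono : MonotoneOn h (Set.Icc L U))
    (hderiv : ∀ v ∈ Set.Icc L U, HasDerivAt h (h' v) v)
    (hderiv_cont : ContinuousOn h' (Set.Icc L U))
    (G : ℝ → ℝ)
    (hG_cont : ContinuousOn G (Set.Icc L U))
    (hG_mono : MonotoneOn G (Set.Icc L U))
    (hG_ineq : ∀ v ∈ Set.Icc L U,
      h v / α ≤ G v * h v - ∫ u in L..v, G u * h' u) :
    (∀ v ∈ Set.Icc L U, (1 / α) * (1 + Real.log (h v / h L)) ≤ G v) ∧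
    (G U ≤ 1 → 1 + Real.log (h U / h L) ≤ α) := by
  -- notation
  set g : ℝ → ℝ := fun u => G u * h' u with hg_def
  set F : ℝ → ℝ := fun v => ∫ u in L..v, g u with hF_def
  have hIcc : Set.uIcc L U = Set.Icc L U := Set.uIcc_of_le hLU
  have hcont_h : ContinuousOn h (Set.Icc L U) := fun v hv =>
    (hderiv v hv).continuousAt.continuousWithinAt
  have hg_cont : ContinuousOn g (Set.Icc L U) := hG_cont.mul hderiv_cont
  -- h' nonnegative on the interior
  have hderiv_nonneg : ∀ v ∈ Set.Ioo L U, 0 ≤ h' v := by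
    intro v hv
    have hvU : v < U := hv.2
    have hd : HasDerivWithinAt h (h' v) (Set.Ioi v) v :=
      (hderiv v (Set.Ioo_subset_Icc_self hv)).hasDerivWithinAt
    rw [hasDerivWithinAt_iff_tendsto_slope] at hd
    have hne : (𝓝[>] v).NeBot := nhdsGT_neBot v
    rw [Set.diff_singleton_eq_self (by simp)] at hd
    refine ge_of_tendsto hd ?_
    filter_upwards [Ioo_mem_nhdsGT_of_mem (Set.left_mem_Ico.mpr hvU)] with x hx
    have hxI : x ∈ Set.Icc L U := ⟨le_of_lt (lt_of_le_of_lt hv.1.le hx.1), hx.2.le⟩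
    have hmo := hmono (Set.Ioo_subset_Icc_self hv) hxI hx.1.le
    have hxv : 0 < x - v := sub_pos.mpr hx.1
    rw [slope_def_field]
    exact div_nonneg (by linarith) hxv.le
  -- integrability of g on subintervals
  have hg_int : ∀ v ∈ Set.Icc L U, IntervalIntegrable g MeasureTheory.volume L v := by
    intro v hv
    exact (hg_cont.mono (fun x hx => by
      rw [Set.uIcc_of_le hv.1] at hx
      exact ⟨hx.1, le_trans hx.2 hv.2⟩)).intervalIntegrable
  -- F is continuous on Icc L U
  have hF_cont : ContinuousOn F (Set.Icc L U) := by
    rw [← hIcc]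
    exact intervalIntegral.continuousOn_primitive_interval
      (by rw [hIcc]; exact hg_cont.integrableOn_compact isCompact_Icc)
  -- F has derivative g v at interior points
  have hF_deriv : ∀ v ∈ Set.Ioo L U, HasDerivAt F (g v) v := by
    intro v hv
    have hmem : Set.Icc L U ∈ 𝓝 v := Icc_mem_nhds hv.1 hv.2
    refine intervalIntegral.integral_hasDerivAt_right
      (hg_int v (Set.Ioo_subset_Icc_self hv))
      (AEStronglyMeasurable.stronglyMeasurableAtFilter_of_mem
        (hg_cont.aestronglyMeasurable measurableSet_Icc) hmem)
      (hg_cont.continuousAt hmem)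
  -- key function Φ
  set Φ : ℝ → ℝ := fun v => F v / h v - (1 / α) * Real.log (h v) with hΦ_def
  have hΦ_mono : MonotoneOn Φ (Set.Icc L U) := by
    have hΦ_deriv : ∀ v ∈ Set.Ioo L U, HasDerivAt Φ
        ((g v * h v - F v * h' v) / (h v) ^ 2 - (1 / α) * (h' v / h v)) v := by
      intro v hv
      have hvI := Set.Ioo_subset_Icc_self hv
      have hhv : h v ≠ 0 := (hpos v hvI).ne'
      exact ((hF_deriv v hv).div (hderiv v hvI) hhv).sub
        (((hderiv v hvI).log hhv).const_mul (1 / α))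
    refine monotoneOn_of_deriv_nonneg (convex_Icc L U)
      ((hF_cont.div hcont_h (fun v hv => (hpos v hv).ne')).sub
        ((hcont_h.log (fun v hv => (hpos v hv).ne')).const_smul (1/α) |>.congr
          (fun v _ => by simp [hΦ_def, smul_eq_mul])))
      ?_ ?_
    · rw [interior_Icc]
      exact fun v hv => ((hΦ_deriv v hv).differentiableAt).differentiableWithinAt
    · rw [interior_Icc]
      intro v hv
      rw [(hΦ_deriv v hv).deriv]
      have hvI := Set.Ioo_subset_Icc_self hv
      have hhv : 0 < h v := hpos v hvI
      have hh' : 0 ≤ h' v := hderiv_nonneg v hv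
      have hkey : h v / α ≤ G v * h v - F v := hG_ineq v hvI
      have h1 : (1 / α) * (h' v / h v) = (h v / α) * h' v / (h v) ^ 2 := by
        field_simp
      have h2 : g v * h v - F v * h' v = (G v * h v - F v) * h' v := by
        simp only [hg_def]; ring
      rw [h1, h2, sub_nonneg]
      apply div_le_div_of_nonneg_right (mul_le_mul_of_nonneg_right hkey hh') (by positivity)
  have hΦL : Φ L = -(1 / α) * Real.log (h L) := by
    simp [hΦ_def, hF_def, intervalIntegral.integral_same]
  -- main inequality
  have main : ∀ v ∈ Set.Icc L U, (1 / α) * (1 + Real.log (h v / h L)) ≤ G v := by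
    intro v hv
    have hLmem : L ∈ Set.Icc L U := ⟨le_refl L, hLU⟩
    have hΦv : Φ L ≤ Φ v := hΦ_mono hLmem hv hv.1
    have hhv : 0 < h v := hpos v hv
    have hhL : 0 < h L := hpos L hLmem
    have hFv : (1 / α) * (Real.log (h v) - Real.log (h L)) ≤ F v / h v := by
      rw [hΦL] at hΦv
      simp only [hΦ_def] at hΦv
      linarith [hΦv]
    have hkey : h v / α ≤ G v * h v - F v := hG_ineq v hv
    have hlog : Real.log (h v / h L) = Real.log (h v) - Real.log (h L) :=
      Real.log_div hhv.ne' hhL.ne'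
    have hGv : 1 / α + F v / h v ≤ G v := by
      have hα' : h v / α = 1 / α * h v := by ring
      have h3 : (1 / α * h v + F v) / h v ≤ G v * h v / h v :=
        div_le_div_of_nonneg_right (by linarith [hkey, hα']) hhv.le
      rw [mul_div_assoc, div_self hhv.ne', mul_one] at h3
      have h4 : (1 / α * h v + F v) / h v = 1 / α + F v / h v := by
        field_simp
      linarith [h3, h4.symm.le, h4.le]
    calc (1 / α) * (1 + Real.log (h v / h L))
        = 1 / α + (1 / α) * (Real.log (h v) - Real.log (h L)) := by rw [hlog]; ring
      _ ≤ 1 / α + F v / h v := by linarith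
      _ ≤ G v := hGv
  refine ⟨main, fun hGU => ?_⟩
  have := main U ⟨hLU, le_refl U⟩
  have h1 : (1 / α) * (1 + Real.log (h U / h L)) ≤ 1 := le_trans this hGU
  calc 1 + Real.log (h U / h L)
      = α * ((1 / α) * (1 + Real.log (h U / h L))) := by field_simp
    _ ≤ α * 1 := by exact mul_le_mul_of_nonneg_left h1 hα.le
    _ = α := mul_one α
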